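/- Let d_θ₂(y) = -(1/2){|y|^λ log|y| - (2/λ²)[log 2 + ψ(1+1/λ)]} and let Y have density f(y) = e^{-(1/2)|y|^λ}/(2^{1+1/λ}Γ(1+1/λ)) with λ ≥ 1. Then E[d_θ₂(Y)] = 0 and Var(d_θ₂(Y)) = (1/λ³)[ν(2+ν) + (1+1/λ)ψ'(1+1/λ)], where ν = log 2 + ψ(1+1/λ). -/

import Mathlib

open MeasureTheory Real Set Filter Asymptotics
open scoped Topology

noncomputable def fcAux (k : ℕ) (t : ℝ) : ℂ := (Real.log t : ℂ) ^ k * (Real.exp (-t) : ℂ)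

noncomputable def GAux (k : ℕ) (s : ℝ) : ℝ :=
  ∫ t in Set.Ioi (0:ℝ), Real.exp (-t) * t ^ (s - 1) * Real.log t ^ k

lemma fcAux_smul (k : ℕ) : (fun t : ℝ => Real.log t • fcAux k t) = fcAux (k+1) := by
  funext t
  simp only [fcAux, Complex.real_smul, pow_succ]
  ring

lemma fcAux_loc (k : ℕ) : LocallyIntegrableOn (fcAux k) (Set.Ioi 0) := by
  apply ContinuousOn.locallyIntegrableOn _ measurableSet_Ioi
  apply ContinuousOn.mul
  · exact (Complex.continuous_ofReal.comp_continuousOn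
      (Real.continuousOn_log.mono (by simp [Set.subset_compl_singleton_iff]))).pow k
  · exact (Complex.continuous_ofReal.comp
      (Real.continuous_exp.comp continuous_neg)).continuousOn

lemma fcAux_top (k : ℕ) : ∀ a : ℝ, fcAux k =O[atTop] (· ^ (-a)) := by
  induction k with
  | zero =>
      intro a
      rw [← isBigO_norm_left]
      simp only [fcAux, pow_zero, one_mul, Complex.norm_real, Real.norm_eq_abs]
      simp_rw [← Real.norm_eq_abs]
      rw [isBigO_norm_left]
      simpa only [neg_one_mul] using (isLittleO_exp_neg_mul_rpow_atTop zero_lt_one _).isBigO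
  | succ k ih =>
      intro a
      have := isBigO_rpow_top_log_smul (show a < a + 1 by linarith) (ih (a+1))
      rwa [fcAux_smul k] at this

lemma fcAux_bot (k : ℕ) : ∀ b : ℝ, 0 < b → fcAux k =O[𝓝[>] (0:ℝ)] (· ^ (-b)) := by
  induction k with
  | zero =>
      intro b hb
      have h1 : fcAux 0 =O[𝓝[>] (0:ℝ)] (fun _ => (1:ℝ)) := by
        refine isBigO_const_of_tendsto (?_ : Tendsto _ _ (𝓝 (1 : ℂ))) one_ne_zero
        have : Tendsto (fun t : ℝ => fcAux 0 t) (𝓝[>] 0) (𝓝 (fcAux 0 0)) := by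
          apply ContinuousAt.continuousWithinAt
          simp only [fcAux, pow_zero, one_mul]
          exact (Complex.continuous_ofReal.comp
            (Real.continuous_exp.comp continuous_neg)).continuousAt
        have h0 : fcAux 0 0 = 1 := by simp [fcAux]
        rwa [h0] at this
      refine h1.trans (IsBigO.of_bound 1 ?_)
      filter_upwards [Ioo_mem_nhdsGT_of_mem (show (0:ℝ) ∈ Set.Ico 0 1 by norm_num)] with t ht
      have h2 : (1:ℝ) ≤ t ^ (-b) := by
        have := Real.rpow_le_rpow_of_exponent_ge ht.1 ht.2.le (show -b ≤ 0 by linarith)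
        simpa using this
      have h3 : (0:ℝ) < t ^ (-b) := Real.rpow_pos_of_pos ht.1 _
      simp only [norm_one, Real.norm_eq_abs, abs_of_pos h3, one_mul]
      exact h2
  | succ k ih =>
      intro b hb
      have := isBigO_rpow_zero_log_smul (show b/2 < b by linarith) (ih (b/2) (by linarith))
      rwa [fcAux_smul k] at this

lemma mellinAux (k : ℕ) {s : ℂ} (hs : 0 < s.re) :
    MellinConvergent (fcAux (k+1)) s ∧
      HasDerivAt (mellin (fcAux k)) (mellin (fcAux (k+1)) s) s := by
  have := mellin_hasDerivAt_of_isBigO_rpow (E := ℂ) (a := s.re + 1) (b := s.re / 2)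
    (fcAux_loc k) (fcAux_top k _) (by linarith) (fcAux_bot k _ (by linarith)) (by linarith)
  rwa [fcAux_smul k] at this

lemma fcAux_pt (k : ℕ) {s t : ℝ} (ht : 0 < t) :
    (t : ℂ) ^ ((s : ℂ) - 1) • fcAux k t
      = ((Real.exp (-t) * t ^ (s - 1) * Real.log t ^ k : ℝ) : ℂ) := by
  have h1 : ((s : ℂ) - 1) = ((s - 1 : ℝ) : ℂ) := by push_cast; ring
  rw [h1, ← Complex.ofReal_cpow ht.le]
  simp only [fcAux, smul_eq_mul]
  push_cast
  ring

lemma mellin_fcAux_real (k : ℕ) {s : ℝ} (hs : 0 < s) :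
    mellin (fcAux k) (s : ℂ) = (GAux k s : ℂ) := by
  unfold mellin GAux
  calc (∫ t in Set.Ioi (0:ℝ), (t : ℂ) ^ ((s:ℂ) - 1) • fcAux k t)
      = ∫ t in Set.Ioi (0:ℝ),
          ((Real.exp (-t) * t ^ (s - 1) * Real.log t ^ k : ℝ) : ℂ) :=
        setIntegral_congr_fun measurableSet_Ioi fun t ht => fcAux_pt k ht
    _ = ((∫ t in Set.Ioi (0:ℝ), Real.exp (-t) * t ^ (s - 1) * Real.log t ^ k : ℝ) : ℂ) :=
        integral_ofReal

lemma GAux_hasDerivAt (k : ℕ) {s : ℝ} (hs : 0 < s) :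
    HasDerivAt (GAux k) (GAux (k+1) s) s := by
  have h1 := (mellinAux k (s := (s : ℂ)) (by simpa using hs)).2
  have h3 := h1.real_of_complex
  have h4 : (mellin (fcAux (k+1)) (s:ℂ)).re = GAux (k+1) s := by
    rw [mellin_fcAux_real (k+1) hs]; simp
  rw [h4] at h3
  refine h3.congr_of_eventuallyEq ?_
  filter_upwards [eventually_gt_nhds hs] with x hx
  rw [mellin_fcAux_real k hx]; simp

lemma GAux_integrable (k : ℕ) {s : ℝ} (hs : 0 < s) :
    IntegrableOn (fun t : ℝ => Real.exp (-t) * t ^ (s - 1) * Real.log t ^ k)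
      (Set.Ioi 0) := by
  cases k with
  | zero => simpa using Real.GammaIntegral_convergent hs
  | succ k =>
      have hconv := (mellinAux k (s := (s : ℂ)) (by simpa using hs)).1
      unfold MellinConvergent at hconv
      have hre := hconv.re
      refine hre.congr ?_
      filter_upwards [ae_restrict_mem measurableSet_Ioi] with t ht
      have h1 : (↑t : ℂ) ^ ((s:ℂ) - 1) • fcAux (k+1) t
          = ((Real.exp (-t) * t ^ (s - 1) * Real.log t ^ (k+1) : ℝ) : ℂ) := fcAux_pt (k+1) ht
      rw [h1]
      exact RCLike.ofReal_re _

/-- The standardized exponential power density (APD with `θ₁ = 1/2`, `θ₂ = l`). -/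
noncomputable def epdDensity (l y : ℝ) : ℝ :=
  Real.exp (-(1 / 2) * |y| ^ l) / ((2 : ℝ) ^ (1 + 1 / l) * Real.Gamma (1 + 1 / l))

/-- The digamma function `ψ(x) = (log ∘ Γ)'(x)`. -/
noncomputable def digamma (x : ℝ) : ℝ :=
  deriv (fun y : ℝ => Real.log (Real.Gamma y)) x

/-- The trigamma function `ψ'`. -/
noncomputable def trigamma (x : ℝ) : ℝ :=
  deriv digamma x

/-- The score component `d_{θ₂}` evaluated at the null `θ₀ = (1/2, l)`. -/
noncomputable def dTheta2 (l y : ℝ) : ℝ :=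
  -(1 / 2) * (|y| ^ l * Real.log |y| - (2 / l ^ 2) * (Real.log 2 + digamma (1 + 1 / l)))

lemma GAux_zero_eq {s : ℝ} (hs : 0 < s) : GAux 0 s = Real.Gamma s := by
  rw [Real.Gamma_eq_integral hs]
  unfold GAux
  simp

lemma Gamma_hasDerivAt {s : ℝ} (hs : 0 < s) :
    HasDerivAt Real.Gamma (GAux 1 s) s := by
  refine (GAux_hasDerivAt 0 hs).congr_of_eventuallyEq ?_
  filter_upwards [eventually_gt_nhds hs] with x hx
  exact (GAux_zero_eq hx).symm

lemma digamma_eq {s : ℝ} (hs : 0 < s) :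
    digamma s = GAux 1 s / Real.Gamma s := by
  exact ((Gamma_hasDerivAt hs).log (Real.Gamma_pos_of_pos hs).ne').deriv

lemma trigamma_eq {s : ℝ} (hs : 0 < s) :
    trigamma s = (GAux 2 s * GAux 0 s - GAux 1 s * GAux 1 s) / (GAux 0 s) ^ 2 := by
  have hne : GAux 0 s ≠ 0 := by
    rw [GAux_zero_eq hs]; exact (Real.Gamma_pos_of_pos hs).ne'
  have hq : HasDerivAt (fun x => GAux 1 x / GAux 0 x)
      ((GAux 2 s * GAux 0 s - GAux 1 s * GAux 1 s) / (GAux 0 s) ^ 2) s :=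
    (GAux_hasDerivAt 1 hs).div (GAux_hasDerivAt 0 hs) hne
  have hd : HasDerivAt digamma
      ((GAux 2 s * GAux 0 s - GAux 1 s * GAux 1 s) / (GAux 0 s) ^ 2) s := by
    refine hq.congr_of_eventuallyEq ?_
    filter_upwards [eventually_gt_nhds hs] with x hx
    rw [digamma_eq hx, GAux_zero_eq hx]
  exact hd.deriv

lemma GAux_rec1 {s : ℝ} (hs : 0 < s) : GAux 1 (s + 1) = GAux 0 s + s * GAux 1 s := by
  have h1 : HasDerivAt (fun x : ℝ => GAux 0 (x + 1)) (GAux 1 (s + 1)) s := by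
    have := (GAux_hasDerivAt 0 (show (0:ℝ) < s + 1 by linarith)).comp s
      ((hasDerivAt_id s).add_const 1)
    simpa [Function.comp_def] using this
  have h2 : HasDerivAt (fun x : ℝ => x * GAux 0 x) (1 * GAux 0 s + s * GAux 1 s) s :=
    (hasDerivAt_id s).mul (GAux_hasDerivAt 0 hs)
  have heq : (fun x : ℝ => x * GAux 0 x) =ᶠ[𝓝 s] fun x : ℝ => GAux 0 (x + 1) := by
    filter_upwards [eventually_gt_nhds hs] with x hx
    rw [GAux_zero_eq (show (0:ℝ) < x + 1 by linarith), GAux_zero_eq hx,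
      Real.Gamma_add_one hx.ne']
  have h3 := h2.congr_of_eventuallyEq heq.symm
  have := h1.unique h3
  linarith

lemma GAux_rec2 {s : ℝ} (hs : 0 < s) :
    GAux 2 (s + 1) = 2 * GAux 1 s + s * GAux 2 s := by
  have h1 : HasDerivAt (fun x : ℝ => GAux 1 (x + 1)) (GAux 2 (s + 1)) s := by
    have := (GAux_hasDerivAt 1 (show (0:ℝ) < s + 1 by linarith)).comp s
      ((hasDerivAt_id s).add_const 1)
    simpa [Function.comp_def] using this
  have h2 : HasDerivAt (fun x : ℝ => GAux 0 x + x * GAux 1 x)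
      (GAux 1 s + (1 * GAux 1 s + s * GAux 2 s)) s :=
    (GAux_hasDerivAt 0 hs).add ((hasDerivAt_id s).mul (GAux_hasDerivAt 1 hs))
  have heq : (fun x : ℝ => GAux 0 x + x * GAux 1 x) =ᶠ[𝓝 s]
      fun x : ℝ => GAux 1 (x + 1) := by
    filter_upwards [eventually_gt_nhds hs] with x hx
    exact (GAux_rec1 hx).symm
  have h3 := h2.congr_of_eventuallyEq heq.symm
  have := h1.unique h3
  linarith

lemma pipeline {l : ℝ} (hl : 0 < l) (q : ℝ → ℝ) :
    (∫ x in Set.Ioi (0:ℝ), q (x ^ l)) =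
      (2 / l) * ∫ t in Set.Ioi (0:ℝ), (2 * t) ^ (1 / l - 1) * q (2 * t) := by
  have h2 : (∫ u in Set.Ioi (0:ℝ), u ^ (1 / l - 1) * q u)
      = 2 * ∫ t in Set.Ioi (0:ℝ), (2 * t) ^ (1 / l - 1) * q (2 * t) := by
    have h := integral_comp_mul_left_Ioi (fun u => u ^ (1 / l - 1) * q u) 0 two_pos
    beta_reduce at h
    simp only [mul_zero, smul_eq_mul] at h
    rw [h]
    ring
  calc (∫ x in Set.Ioi (0:ℝ), q (x ^ l))
      = ∫ x in Set.Ioi (0:ℝ),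
          (|l| * x ^ (l - 1)) • ((1 / l) * ((x ^ l) ^ (1 / l - 1) * q (x ^ l))) := by
        refine (setIntegral_congr_fun measurableSet_Ioi fun x hx => ?_).symm
        have hx0 : (0:ℝ) < x := hx
        have hmul : l * (1 / l - 1) = 1 - l := by field_simp
        rw [smul_eq_mul, abs_of_pos hl, ← Real.rpow_mul hx0.le, hmul]
        have hone : x ^ (l - 1) * x ^ (1 - l) = 1 := by
          rw [← Real.rpow_add hx0]; norm_num
        calc l * x ^ (l - 1) * (1 / l * (x ^ (1 - l) * q (x ^ l)))
            = (l * (1 / l)) * (x ^ (l - 1) * x ^ (1 - l)) * q (x ^ l) := by ring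
          _ = q (x ^ l) := by rw [hone]; field_simp
    _ = ∫ u in Set.Ioi (0:ℝ), (1 / l) * (u ^ (1 / l - 1) * q u) :=
        integral_comp_rpow_Ioi (fun u => (1 / l) * (u ^ (1 / l - 1) * q u)) hl.ne'
    _ = (1 / l) * ∫ u in Set.Ioi (0:ℝ), u ^ (1 / l - 1) * q u :=
        integral_const_mul _ _
    _ = (2 / l) * ∫ t in Set.Ioi (0:ℝ), (2 * t) ^ (1 / l - 1) * q (2 * t) := by
        rw [h2]; ring

noncomputable def BAux (k : ℕ) (σ : ℝ) (t : ℝ) : ℝ :=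
  Real.exp (-t) * t ^ (σ - 1) * Real.log t ^ k

lemma BAux_integral (k : ℕ) (σ : ℝ) :
    (∫ t in Set.Ioi (0:ℝ), BAux k σ t) = GAux k σ := rfl

lemma BAux_integrable (k : ℕ) {σ : ℝ} (hσ : 0 < σ) :
    IntegrableOn (fun t => BAux k σ t) (Set.Ioi (0:ℝ)) := GAux_integrable k hσ

lemma split3 {μ : Measure ℝ} {f1 f2 f3 : ℝ → ℝ} (h1 : Integrable f1 μ)
    (h2 : Integrable f2 μ) (h3 : Integrable f3 μ) :
    ∫ x, (f1 x + f2 x + f3 x) ∂μ = (∫ x, f1 x ∂μ) + (∫ x, f2 x ∂μ) + ∫ x, f3 x ∂μ := by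
  calc ∫ x, (f1 x + f2 x + f3 x) ∂μ
      = (∫ x, (f1 x + f2 x) ∂μ) + ∫ x, f3 x ∂μ := integral_add (h1.add h2) h3
    _ = (∫ x, f1 x ∂μ) + (∫ x, f2 x ∂μ) + ∫ x, f3 x ∂μ := by rw [integral_add h1 h2]

lemma split6 {μ : Measure ℝ} {f1 f2 f3 f4 f5 f6 : ℝ → ℝ} (h1 : Integrable f1 μ)
    (h2 : Integrable f2 μ) (h3 : Integrable f3 μ) (h4 : Integrable f4 μ)
    (h5 : Integrable f5 μ) (h6 : Integrable f6 μ) :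
    ∫ x, (f1 x + f2 x + f3 x + f4 x + f5 x + f6 x) ∂μ
      = (∫ x, f1 x ∂μ) + (∫ x, f2 x ∂μ) + (∫ x, f3 x ∂μ) + (∫ x, f4 x ∂μ)
        + (∫ x, f5 x ∂μ) + ∫ x, f6 x ∂μ := by
  calc ∫ x, (f1 x + f2 x + f3 x + f4 x + f5 x + f6 x) ∂μ
      = (∫ x, (f1 x + f2 x + f3 x + f4 x + f5 x) ∂μ) + ∫ x, f6 x ∂μ :=
        integral_add ((((h1.add h2).add h3).add h4).add h5) h6
    _ = (∫ x, (f1 x + f2 x + f3 x + f4 x) ∂μ) + (∫ x, f5 x ∂μ) + ∫ x, f6 x ∂μ := by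
        exact congrArg (fun z => z + ∫ x, f6 x ∂μ)
          (integral_add (((h1.add h2).add h3).add h4) h5)
    _ = (∫ x, (f1 x + f2 x + f3 x) ∂μ) + (∫ x, f4 x ∂μ) + (∫ x, f5 x ∂μ) + ∫ x, f6 x ∂μ := by
        exact congrArg (fun z => z + (∫ x, f5 x ∂μ) + ∫ x, f6 x ∂μ)
          (integral_add ((h1.add h2).add h3) h4)
    _ = (∫ x, f1 x ∂μ) + (∫ x, f2 x ∂μ) + (∫ x, f3 x ∂μ) + (∫ x, f4 x ∂μ)
        + (∫ x, f5 x ∂μ) + ∫ x, f6 x ∂μ := by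
        exact congrArg (fun z => z + (∫ x, f4 x ∂μ) + (∫ x, f5 x ∂μ) + ∫ x, f6 x ∂μ)
          (split3 h1 h2 h3)

lemma key_abs (g : ℝ → ℝ) (hg : ∀ y : ℝ, g |y| = g y) :
    (∫ y : ℝ, g y) = 2 * ∫ x in Set.Ioi (0:ℝ), g x := by
  rw [← integral_comp_abs (f := g)]
  have h2 : (fun x : ℝ => g |x|) = fun x : ℝ => g x := funext hg
  rw [h2]

lemma hF2' {l : ℝ} (hl0 : 0 < l) :
    GAux 1 (1 + 1/l) = digamma (1 + 1/l) * Real.Gamma (1 + 1/l) := by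
  have hs0 : (0:ℝ) < 1 + 1/l := by positivity
  rw [digamma_eq hs0]
  field_simp

lemma hF3' {l : ℝ} (hl0 : 0 < l) :
    GAux 2 (1 + 1/l)
      = (trigamma (1 + 1/l) + digamma (1 + 1/l) ^ 2) * Real.Gamma (1 + 1/l) := by
  have hs0 : (0:ℝ) < 1 + 1/l := by positivity
  have hΓ0 : 0 < Real.Gamma (1 + 1/l) := Real.Gamma_pos_of_pos hs0
  have ht := trigamma_eq hs0
  rw [GAux_zero_eq hs0, hF2' hl0] at ht
  rw [ht, digamma_eq hs0]
  field_simp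
  ring

lemma hF4' {l : ℝ} (hl0 : 0 < l) :
    GAux 0 ((1:ℝ)/l) = l * Real.Gamma (1 + 1/l) := by
  have hinv : (0:ℝ) < 1/l := by positivity
  rw [GAux_zero_eq hinv, show (1:ℝ) + 1/l = 1/l + 1 by ring,
    Real.Gamma_add_one hinv.ne']
  field_simp

lemma mean_zero (l : ℝ) (hl : 1 ≤ l) :
    (∫ y : ℝ, dTheta2 l y * epdDensity l y) = 0 := by
  have hl0 : (0:ℝ) < l := lt_of_lt_of_le one_pos hl
  have hinv : (0:ℝ) < 1/l := by positivity
  have hs0 : (0:ℝ) < 1 + 1/l := by positivity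
  have hΓ0 : 0 < Real.Gamma (1 + 1/l) := Real.Gamma_pos_of_pos hs0
  have hP : (0:ℝ) < (2:ℝ) ^ ((1:ℝ)/l) := Real.rpow_pos_of_pos two_pos _
  have step1 : (∫ y : ℝ, dTheta2 l y * epdDensity l y)
      = 2 * ∫ x in Set.Ioi (0:ℝ), dTheta2 l x * epdDensity l x :=
    key_abs (fun y => dTheta2 l y * epdDensity l y)
      (fun y => by simp only [dTheta2, epdDensity, abs_abs])
  have step2 : (∫ x in Set.Ioi (0:ℝ), dTheta2 l x * epdDensity l x)
      = ∫ x in Set.Ioi (0:ℝ), (fun u => -(1/2) * (1/l * u * Real.log u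
          - 2/l^2 * (Real.log 2 + digamma (1 + 1/l)))
          * (Real.exp (-(1/2) * u)
            / ((2:ℝ) ^ (1 + 1/l) * Real.Gamma (1 + 1/l)))) (x ^ l) := by
    refine setIntegral_congr_fun measurableSet_Ioi fun x hx => ?_
    have hx0 : (0:ℝ) < x := hx
    simp only [dTheta2, epdDensity]
    rw [abs_of_pos hx0, Real.log_rpow hx0]
    field_simp
  have hexp : (∫ t in Set.Ioi (0:ℝ), (2*t) ^ ((1:ℝ)/l - 1)
        * (fun u => -(1/2) * (1/l * u * Real.log u
          - 2/l^2 * (Real.log 2 + digamma (1 + 1/l)))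
          * (Real.exp (-(1/2) * u)
            / ((2:ℝ) ^ (1 + 1/l) * Real.Gamma (1 + 1/l)))) (2*t))
      = (-(1/(4 * Real.Gamma (1 + 1/l) * l))) * GAux 1 (1 + 1/l)
        + (-(Real.log 2/(4 * Real.Gamma (1 + 1/l) * l))) * GAux 0 (1 + 1/l)
        + ((Real.log 2 + digamma (1 + 1/l))/(4 * Real.Gamma (1 + 1/l) * l^2))
            * GAux 0 ((1:ℝ)/l) := by
    calc (∫ t in Set.Ioi (0:ℝ), (2*t) ^ ((1:ℝ)/l - 1)
        * (fun u => -(1/2) * (1/l * u * Real.log u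
          - 2/l^2 * (Real.log 2 + digamma (1 + 1/l)))
          * (Real.exp (-(1/2) * u)
            / ((2:ℝ) ^ (1 + 1/l) * Real.Gamma (1 + 1/l)))) (2*t))
        = ∫ t in Set.Ioi (0:ℝ),
            ((-(1/(4 * Real.Gamma (1 + 1/l) * l))) * BAux 1 (1 + 1/l) t
            + (-(Real.log 2/(4 * Real.Gamma (1 + 1/l) * l))) * BAux 0 (1 + 1/l) t
            + ((Real.log 2 + digamma (1 + 1/l))/(4 * Real.Gamma (1 + 1/l) * l^2))
                * BAux 0 ((1:ℝ)/l) t) := by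
          refine setIntegral_congr_fun measurableSet_Ioi fun t ht => ?_
          have ht0 : (0:ℝ) < t := ht
          simp only [BAux]
          rw [Real.mul_rpow (by norm_num : (0:ℝ) ≤ 2) ht0.le,
            Real.log_mul two_ne_zero ht0.ne',
            show -(1/2 : ℝ) * (2*t) = -t by ring,
            Real.rpow_sub two_pos, Real.rpow_one,
            Real.rpow_add two_pos, Real.rpow_one,
            show (1:ℝ) + 1/l - 1 = (1/l - 1) + 1 by ring,
            Real.rpow_add ht0, Real.rpow_one,
            pow_one, pow_zero]
          field_simp
          ring
      _ = (∫ t in Set.Ioi (0:ℝ),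
              (-(1/(4 * Real.Gamma (1 + 1/l) * l))) * BAux 1 (1 + 1/l) t)
          + (∫ t in Set.Ioi (0:ℝ),
              (-(Real.log 2/(4 * Real.Gamma (1 + 1/l) * l))) * BAux 0 (1 + 1/l) t)
          + ∫ t in Set.Ioi (0:ℝ),
              ((Real.log 2 + digamma (1 + 1/l))/(4 * Real.Gamma (1 + 1/l) * l^2))
                * BAux 0 ((1:ℝ)/l) t :=
          split3 ((BAux_integrable 1 hs0).const_mul _)
            ((BAux_integrable 0 hs0).const_mul _)
            ((BAux_integrable 0 hinv).const_mul _)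
      _ = (-(1/(4 * Real.Gamma (1 + 1/l) * l))) * GAux 1 (1 + 1/l)
          + (-(Real.log 2/(4 * Real.Gamma (1 + 1/l) * l))) * GAux 0 (1 + 1/l)
          + ((Real.log 2 + digamma (1 + 1/l))/(4 * Real.Gamma (1 + 1/l) * l^2))
              * GAux 0 ((1:ℝ)/l) := by
          rw [show (∫ t in Set.Ioi (0:ℝ),
              (-(1/(4 * Real.Gamma (1 + 1/l) * l))) * BAux 1 (1 + 1/l) t)
              = (-(1/(4 * Real.Gamma (1 + 1/l) * l))) * GAux 1 (1 + 1/l) from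
            integral_const_mul _ _,
            show (∫ t in Set.Ioi (0:ℝ),
              (-(Real.log 2/(4 * Real.Gamma (1 + 1/l) * l))) * BAux 0 (1 + 1/l) t)
              = (-(Real.log 2/(4 * Real.Gamma (1 + 1/l) * l))) * GAux 0 (1 + 1/l) from
            integral_const_mul _ _,
            show (∫ t in Set.Ioi (0:ℝ),
              ((Real.log 2 + digamma (1 + 1/l))/(4 * Real.Gamma (1 + 1/l) * l^2))
                * BAux 0 ((1:ℝ)/l) t)
              = ((Real.log 2 + digamma (1 + 1/l))/(4 * Real.Gamma (1 + 1/l) * l^2))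
                * GAux 0 ((1:ℝ)/l) from integral_const_mul _ _]
  rw [step1, step2, pipeline hl0 (fun u => -(1/2) * (1/l * u * Real.log u
          - 2/l^2 * (Real.log 2 + digamma (1 + 1/l)))
          * (Real.exp (-(1/2) * u)
            / ((2:ℝ) ^ (1 + 1/l) * Real.Gamma (1 + 1/l)))), hexp,
    GAux_zero_eq hs0, hF2' hl0, hF4' hl0]
  field_simp
  ring

lemma second_moment (l : ℝ) (hl : 1 ≤ l) :
    (∫ y : ℝ, (dTheta2 l y) ^ 2 * epdDensity l y)
      = (1 / l ^ 3) *
          ((Real.log 2 + digamma (1 + 1 / l)) * (2 + (Real.log 2 + digamma (1 + 1 / l)))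
            + (1 + 1 / l) * trigamma (1 + 1 / l)) := by
  have hl0 : (0:ℝ) < l := lt_of_lt_of_le one_pos hl
  have hinv : (0:ℝ) < 1/l := by positivity
  have hs0 : (0:ℝ) < 1 + 1/l := by positivity
  have hs1 : (0:ℝ) < 2 + 1/l := by positivity
  have hΓ0 : 0 < Real.Gamma (1 + 1/l) := Real.Gamma_pos_of_pos hs0
  have hP : (0:ℝ) < (2:ℝ) ^ ((1:ℝ)/l) := Real.rpow_pos_of_pos two_pos _
  have hF5 : GAux 0 (2 + 1/l) = (1 + 1/l) * Real.Gamma (1 + 1/l) := by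
    rw [show (2:ℝ) + 1/l = (1 + 1/l) + 1 by ring, GAux_zero_eq (by positivity),
      Real.Gamma_add_one hs0.ne']
  have hF6 : GAux 1 (2 + 1/l)
      = Real.Gamma (1 + 1/l) + (1 + 1/l) * (digamma (1 + 1/l) * Real.Gamma (1 + 1/l)) := by
    rw [show (2:ℝ) + 1/l = (1 + 1/l) + 1 by ring, GAux_rec1 hs0, GAux_zero_eq hs0,
      hF2' hl0]
  have hF7 : GAux 2 (2 + 1/l)
      = 2 * (digamma (1 + 1/l) * Real.Gamma (1 + 1/l))
        + (1 + 1/l) * ((trigamma (1 + 1/l) + digamma (1 + 1/l) ^ 2)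
            * Real.Gamma (1 + 1/l)) := by
    rw [show (2:ℝ) + 1/l = (1 + 1/l) + 1 by ring, GAux_rec2 hs0, hF2' hl0, hF3' hl0]
  have step1 : (∫ y : ℝ, (dTheta2 l y) ^ 2 * epdDensity l y)
      = 2 * ∫ x in Set.Ioi (0:ℝ), (dTheta2 l x) ^ 2 * epdDensity l x :=
    key_abs (fun y => (dTheta2 l y) ^ 2 * epdDensity l y)
      (fun y => by simp only [dTheta2, epdDensity, abs_abs])
  have step2 : (∫ x in Set.Ioi (0:ℝ), (dTheta2 l x) ^ 2 * epdDensity l x)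
      = ∫ x in Set.Ioi (0:ℝ), (fun u => (-(1/2) * (1/l * u * Real.log u
          - 2/l^2 * (Real.log 2 + digamma (1 + 1/l)))) ^ 2
          * (Real.exp (-(1/2) * u)
            / ((2:ℝ) ^ (1 + 1/l) * Real.Gamma (1 + 1/l)))) (x ^ l) := by
    refine setIntegral_congr_fun measurableSet_Ioi fun x hx => ?_
    have hx0 : (0:ℝ) < x := hx
    simp only [dTheta2, epdDensity]
    rw [abs_of_pos hx0, Real.log_rpow hx0]
    field_simp
  have hexp : (∫ t in Set.Ioi (0:ℝ), (2*t) ^ ((1:ℝ)/l - 1)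
        * (fun u => (-(1/2) * (1/l * u * Real.log u
          - 2/l^2 * (Real.log 2 + digamma (1 + 1/l)))) ^ 2
          * (Real.exp (-(1/2) * u)
            / ((2:ℝ) ^ (1 + 1/l) * Real.Gamma (1 + 1/l)))) (2*t))
      = (1/(4 * Real.Gamma (1 + 1/l) * l^2)) * GAux 2 (2 + 1/l)
        + (Real.log 2/(2 * Real.Gamma (1 + 1/l) * l^2)) * GAux 1 (2 + 1/l)
        + ((Real.log 2)^2/(4 * Real.Gamma (1 + 1/l) * l^2)) * GAux 0 (2 + 1/l)
        + (-((Real.log 2 + digamma (1 + 1/l))/(2 * Real.Gamma (1 + 1/l) * l^3)))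
            * GAux 1 (1 + 1/l)
        + (-((Real.log 2 + digamma (1 + 1/l)) * Real.log 2
              /(2 * Real.Gamma (1 + 1/l) * l^3))) * GAux 0 (1 + 1/l)
        + ((Real.log 2 + digamma (1 + 1/l))^2/(4 * Real.Gamma (1 + 1/l) * l^4))
            * GAux 0 ((1:ℝ)/l) := by
    calc (∫ t in Set.Ioi (0:ℝ), (2*t) ^ ((1:ℝ)/l - 1)
        * (fun u => (-(1/2) * (1/l * u * Real.log u
          - 2/l^2 * (Real.log 2 + digamma (1 + 1/l)))) ^ 2
          * (Real.exp (-(1/2) * u)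
            / ((2:ℝ) ^ (1 + 1/l) * Real.Gamma (1 + 1/l)))) (2*t))
        = ∫ t in Set.Ioi (0:ℝ),
            ((1/(4 * Real.Gamma (1 + 1/l) * l^2)) * BAux 2 (2 + 1/l) t
            + (Real.log 2/(2 * Real.Gamma (1 + 1/l) * l^2)) * BAux 1 (2 + 1/l) t
            + ((Real.log 2)^2/(4 * Real.Gamma (1 + 1/l) * l^2)) * BAux 0 (2 + 1/l) t
            + (-((Real.log 2 + digamma (1 + 1/l))/(2 * Real.Gamma (1 + 1/l) * l^3)))
                * BAux 1 (1 + 1/l) t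
            + (-((Real.log 2 + digamma (1 + 1/l)) * Real.log 2
                  /(2 * Real.Gamma (1 + 1/l) * l^3))) * BAux 0 (1 + 1/l) t
            + ((Real.log 2 + digamma (1 + 1/l))^2/(4 * Real.Gamma (1 + 1/l) * l^4))
                * BAux 0 ((1:ℝ)/l) t) := by
          refine setIntegral_congr_fun measurableSet_Ioi fun t ht => ?_
          have ht0 : (0:ℝ) < t := ht
          simp only [BAux]
          rw [Real.mul_rpow (by norm_num : (0:ℝ) ≤ 2) ht0.le,
            Real.log_mul two_ne_zero ht0.ne',
            show -(1/2 : ℝ) * (2*t) = -t by ring,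
            Real.rpow_sub two_pos, Real.rpow_one,
            Real.rpow_add two_pos, Real.rpow_one,
            show (2:ℝ) + 1/l - 1 = ((1/l - 1) + 1) + 1 by ring,
            show (1:ℝ) + 1/l - 1 = (1/l - 1) + 1 by ring,
            Real.rpow_add ht0, Real.rpow_add ht0, Real.rpow_one,
            pow_one, pow_zero]
          field_simp
          ring
      _ = (∫ t in Set.Ioi (0:ℝ),
              (1/(4 * Real.Gamma (1 + 1/l) * l^2)) * BAux 2 (2 + 1/l) t)
          + (∫ t in Set.Ioi (0:ℝ),
              (Real.log 2/(2 * Real.Gamma (1 + 1/l) * l^2)) * BAux 1 (2 + 1/l) t)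
          + (∫ t in Set.Ioi (0:ℝ),
              ((Real.log 2)^2/(4 * Real.Gamma (1 + 1/l) * l^2)) * BAux 0 (2 + 1/l) t)
          + (∫ t in Set.Ioi (0:ℝ),
              (-((Real.log 2 + digamma (1 + 1/l))/(2 * Real.Gamma (1 + 1/l) * l^3)))
                * BAux 1 (1 + 1/l) t)
          + (∫ t in Set.Ioi (0:ℝ),
              (-((Real.log 2 + digamma (1 + 1/l)) * Real.log 2
                  /(2 * Real.Gamma (1 + 1/l) * l^3))) * BAux 0 (1 + 1/l) t)
          + ∫ t in Set.Ioi (0:ℝ),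
              ((Real.log 2 + digamma (1 + 1/l))^2/(4 * Real.Gamma (1 + 1/l) * l^4))
                * BAux 0 ((1:ℝ)/l) t :=
          split6 ((BAux_integrable 2 hs1).const_mul _)
            ((BAux_integrable 1 hs1).const_mul _)
            ((BAux_integrable 0 hs1).const_mul _)
            ((BAux_integrable 1 hs0).const_mul _)
            ((BAux_integrable 0 hs0).const_mul _)
            ((BAux_integrable 0 hinv).const_mul _)
      _ = (1/(4 * Real.Gamma (1 + 1/l) * l^2)) * GAux 2 (2 + 1/l)
          + (Real.log 2/(2 * Real.Gamma (1 + 1/l) * l^2)) * GAux 1 (2 + 1/l)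
          + ((Real.log 2)^2/(4 * Real.Gamma (1 + 1/l) * l^2)) * GAux 0 (2 + 1/l)
          + (-((Real.log 2 + digamma (1 + 1/l))/(2 * Real.Gamma (1 + 1/l) * l^3)))
              * GAux 1 (1 + 1/l)
          + (-((Real.log 2 + digamma (1 + 1/l)) * Real.log 2
                /(2 * Real.Gamma (1 + 1/l) * l^3))) * GAux 0 (1 + 1/l)
          + ((Real.log 2 + digamma (1 + 1/l))^2/(4 * Real.Gamma (1 + 1/l) * l^4))
              * GAux 0 ((1:ℝ)/l) := by
          simp only [integral_const_mul, BAux_integral]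
  rw [step1, step2, pipeline hl0 (fun u => (-(1/2) * (1/l * u * Real.log u
          - 2/l^2 * (Real.log 2 + digamma (1 + 1/l)))) ^ 2
          * (Real.exp (-(1/2) * u)
            / ((2:ℝ) ^ (1 + 1/l) * Real.Gamma (1 + 1/l)))), hexp,
    hF7, hF6, hF5, hF2' hl0, GAux_zero_eq hs0, hF4' hl0]
  field_simp
  ring

theorem dTheta2_mean_and_variance (l : ℝ) (hl : 1 ≤ l) :
    (∫ y : ℝ, dTheta2 l y * epdDensity l y = 0) ∧
    (∫ y : ℝ, (dTheta2 l y) ^ 2 * epdDensity l y) -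
        (∫ y : ℝ, dTheta2 l y * epdDensity l y) ^ 2
      = (1 / l ^ 3) *
          ((Real.log 2 + digamma (1 + 1 / l)) * (2 + (Real.log 2 + digamma (1 + 1 / l)))
            + (1 + 1 / l) * trigamma (1 + 1 / l)) := by
  have h1 := mean_zero l hl
  refine ⟨h1, ?_⟩
  rw [h1, second_moment l hl]
  norm_num
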